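/- If A_t satisfies the matrix ODE dA_t/dt = A_t (B_t - F_t + (1/2) G_t G_t^T C_skip(t)) with A_t invertible, and z_t satisfies dz_t/dt = (F_t - (1/2) G_t G_t^T C_skip(t)) z_t - (1/2) G_t G_t^T C_out(t) ε(z_t, t), then ẑ_t = A_t z_t satisfies dẑ_t/dt = A_t B_t A_t⁻¹ ẑ_t + dΦ_t/dt · ε(A_t⁻¹ ẑ_t, t), where dΦ_t/dt = -(1/2) A_t G_t G_t^T C_out(t). -/
import Mathlib


attribute [local instance] Matrix.normedAddCommGroup Matrix.normedSpace

open Matrix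

noncomputable def mvL (d : ℕ) : Matrix (Fin d) (Fin d) ℝ →L[ℝ] (Fin d → ℝ) →L[ℝ] (Fin d → ℝ) :=
  LinearMap.toContinuousLinearMap
    { toFun := fun M => LinearMap.toContinuousLinearMap M.mulVecLin
      map_add' := by intro M N; ext v; simp [Matrix.add_mulVec]
      map_smul' := by intro c M; ext v; simp [Matrix.smul_mulVec] }

@[simp] lemma mvL_apply (d : ℕ) (M : Matrix (Fin d) (Fin d) ℝ) (v : Fin d → ℝ) :
    mvL d M v = M.mulVec v := rfl

lemma hasDerivAt_mulVec {d : ℕ} {A : ℝ → Matrix (Fin d) (Fin d) ℝ} {z : ℝ → Fin d → ℝ}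
    {A' : Matrix (Fin d) (Fin d) ℝ} {z' : Fin d → ℝ} {t : ℝ}
    (hA : HasDerivAt A A' t) (hz : HasDerivAt z z' t) :
    HasDerivAt (fun t => (A t).mulVec (z t)) (A'.mulVec (z t) + (A t).mulVec z') t := by
  have h1 : HasDerivAt (fun t => mvL d (A t)) (mvL d A') t :=
    ((mvL d).hasFDerivAt.comp_hasDerivAt t hA)
  simpa using h1.clm_apply hz

/-- Theorem 1 (transformed probability-flow ODE): if `A` satisfies
`dA/dt = A (B - F + (1/2) G Gᵀ C_skip)` with `A t` invertible, and `z` satisfies the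
probability-flow ODE with the mixed score parameterization, then `ẑ t = A t z t`
satisfies the transformed ODE
`dẑ/dt = A B A⁻¹ ẑ + (dΦ/dt) ε(A⁻¹ ẑ, t)`, where `dΦ/dt = -(1/2) A G Gᵀ C_out`. -/
theorem transformed_ode
    (d : ℕ) (hd : 0 < d)
    (F G B Cskip Cout : ℝ → Matrix (Fin d) (Fin d) ℝ)
    (hF : Continuous F) (hG : Continuous G) (hB : Continuous B)
    (hCskip : Continuous Cskip) (hCout : Continuous Cout)
    (ε : (Fin d → ℝ) → ℝ → (Fin d → ℝ)) (hε : Continuous fun p : (Fin d → ℝ) × ℝ => ε p.1 p.2)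
    (A : ℝ → Matrix (Fin d) (Fin d) ℝ)
    (hAunit : ∀ t, IsUnit (A t))
    (hA : ∀ t, HasDerivAt A
      (A t * (B t - F t + (1/2 : ℝ) • (G t * (G t)ᵀ * Cskip t))) t)
    (z : ℝ → (Fin d → ℝ))
    (hz : ∀ t, HasDerivAt z
      ((F t - (1/2 : ℝ) • (G t * (G t)ᵀ * Cskip t)).mulVec (z t)
        - ((1/2 : ℝ) • (G t * (G t)ᵀ * Cout t)).mulVec (ε (z t) t)) t) :
    ∀ t, HasDerivAt (fun t => (A t).mulVec (z t))
      ((A t * B t * (A t)⁻¹).mulVec ((A t).mulVec (z t))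
        + (-(1/2 : ℝ) • (A t * (G t * (G t)ᵀ * Cout t))).mulVec
            (ε ((A t)⁻¹.mulVec ((A t).mulVec (z t))) t)) t := by
  intro t
  have hdet : IsUnit (A t).det := (Matrix.isUnit_iff_isUnit_det _).mp (hAunit t)
  have key := hasDerivAt_mulVec (hA t) (hz t)
  convert key using 1
  have hinv : (A t)⁻¹ * A t = 1 := Matrix.nonsing_inv_mul _ hdet
  rw [Matrix.mulVec_mulVec, Matrix.mulVec_mulVec, hinv, mul_assoc (A t * B t), hinv,
    mul_one, Matrix.one_mulVec]
  simp only [mul_add, mul_sub, Matrix.add_mulVec, Matrix.sub_mulVec, Matrix.mulVec_sub,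
    Matrix.mulVec_mulVec, Matrix.mulVec_smul, mul_smul_comm, Matrix.smul_mulVec,
    neg_smul, Matrix.neg_mulVec]
  abel
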